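/- (Theorem 4, aggregation shrinks the embedding distance) For every matrix of node embeddings X ∈ ℝ^{n×d}, one aggregation step H = W·X (i.e., H_i = Σ_j W_{ij} X_j) satisfies D(H) ≤ D(X), where D(X) = (1/4)·Σ_{i,j} W_{ij} ‖X_i − X_j‖₂² = (1/2)·trace(Xᵀ L X). Equivalently, for every x ∈ ℝⁿ, (W x)ᵀ L (W x) ≤ xᵀ L x. -/
import Mathlib

open Matrix
open scoped BigOperators

section Aux

variable {n : ℕ} (W : Matrix (Fin n) (Fin n) ℝ)

/-- column sums are 1 for a symmetric row-stochastic matrix -/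
lemma aux_colsum (hsymm : W.IsSymm) (hrow : ∀ i, ∑ j, W i j = 1) (j : Fin n) :
    ∑ i, W i j = 1 := by
  have : ∑ i, W i j = ∑ i, W j i := by
    refine Finset.sum_congr rfl fun i _ => ?_
    exact (hsymm.apply i j).symm
  rw [this, hrow]

/-- `I + W` is positive semidefinite (as a quadratic form). -/
lemma aux_IplusW (hsymm : W.IsSymm) (hnonneg : ∀ i j, 0 ≤ W i j)
    (hrow : ∀ i, ∑ j, W i j = 1) (y : Fin n → ℝ) :
    0 ≤ (∑ i, y i * y i) + ∑ i, ∑ j, W i j * (y i * y j) := by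
  have key : ∑ i, ∑ j, W i j * (y i + y j) ^ 2
      = 2 * ((∑ i, y i * y i) + ∑ i, ∑ j, W i j * (y i * y j)) := by
    have expand : ∀ i j : Fin n, W i j * (y i + y j) ^ 2
        = W i j * (y i * y i) + W i j * (y j * y j) + 2 * (W i j * (y i * y j)) := by
      intro i j; ring
    calc ∑ i, ∑ j, W i j * (y i + y j) ^ 2
        = ∑ i, ∑ j, (W i j * (y i * y i) + W i j * (y j * y j)
            + 2 * (W i j * (y i * y j))) := by
          exact Finset.sum_congr rfl fun i _ => Finset.sum_congr rfl fun j _ => expand i j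
      _ = (∑ i, ∑ j, W i j * (y i * y i)) + (∑ i, ∑ j, W i j * (y j * y j))
            + 2 * ∑ i, ∑ j, W i j * (y i * y j) := by
          simp [Finset.sum_add_distrib, Finset.mul_sum]
      _ = (∑ i, y i * y i) + (∑ i, y i * y i)
            + 2 * ∑ i, ∑ j, W i j * (y i * y j) := by
          congr 2
          · refine Finset.sum_congr rfl fun i _ => ?_
            rw [← Finset.sum_mul, hrow]; ring
          · rw [Finset.sum_comm]
            refine Finset.sum_congr rfl fun j _ => ?_
            rw [← Finset.sum_mul, aux_colsum W hsymm hrow]; ring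
      _ = 2 * ((∑ i, y i * y i) + ∑ i, ∑ j, W i j * (y i * y j)) := by ring
  have pos : 0 ≤ ∑ i, ∑ j, W i j * (y i + y j) ^ 2 := by
    refine Finset.sum_nonneg fun i _ => Finset.sum_nonneg fun j _ => ?_
    exact mul_nonneg (hnonneg i j) (sq_nonneg _)
  linarith [key ▸ pos]

/-- per-column quadratic form identity -/
lemma aux_quad (hsymm : W.IsSymm) (hrow : ∀ i, ∑ j, W i j = 1) (x : Fin n → ℝ) :
    ∑ i, ∑ j, W i j * (x i - x j) ^ 2 = 2 * (x ⬝ᵥ (1 - W : Matrix (Fin n) (Fin n) ℝ).mulVec x) := by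
  have hrhs : x ⬝ᵥ (1 - W : Matrix (Fin n) (Fin n) ℝ).mulVec x
      = (∑ i, x i * x i) - ∑ i, ∑ j, W i j * (x i * x j) := by
    rw [sub_mulVec, one_mulVec]
    simp only [dotProduct, Pi.sub_apply, mulVec, dotProduct]
    rw [← Finset.sum_sub_distrib]
    refine Finset.sum_congr rfl fun i _ => ?_
    rw [mul_sub, Finset.mul_sum]
    congr 1
    refine Finset.sum_congr rfl fun j _ => by ring
  rw [hrhs]
  have expand : ∀ i j : Fin n, W i j * (x i - x j) ^ 2
      = W i j * (x i * x i) + W i j * (x j * x j) - 2 * (W i j * (x i * x j)) := by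
    intro i j; ring
  calc ∑ i, ∑ j, W i j * (x i - x j) ^ 2
      = ∑ i, ∑ j, (W i j * (x i * x i) + W i j * (x j * x j)
          - 2 * (W i j * (x i * x j))) := by
        exact Finset.sum_congr rfl fun i _ => Finset.sum_congr rfl fun j _ => expand i j
    _ = (∑ i, ∑ j, W i j * (x i * x i)) + (∑ i, ∑ j, W i j * (x j * x j))
          - 2 * ∑ i, ∑ j, W i j * (x i * x j) := by
        simp [Finset.sum_sub_distrib, Finset.sum_add_distrib, Finset.mul_sum]
    _ = (∑ i, x i * x i) + (∑ i, x i * x i) - 2 * ∑ i, ∑ j, W i j * (x i * x j) := by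
        congr 2
        · refine Finset.sum_congr rfl fun i _ => ?_
          rw [← Finset.sum_mul, hrow]; ring
        · rw [Finset.sum_comm]
          refine Finset.sum_congr rfl fun j _ => ?_
          rw [← Finset.sum_mul, aux_colsum W hsymm hrow]; ring
    _ = 2 * ((∑ i, x i * x i) - ∑ i, ∑ j, W i j * (x i * x j)) := by ring

/-- the key scalar inequality -/
lemma aux_shrink (hsymm : W.IsSymm) (hnonneg : ∀ i j, 0 ≤ W i j)
    (hrow : ∀ i, ∑ j, W i j = 1) (x : Fin n → ℝ) :
    (W.mulVec x) ⬝ᵥ ((1 - W : Matrix (Fin n) (Fin n) ℝ).mulVec (W.mulVec x))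
      ≤ x ⬝ᵥ ((1 - W : Matrix (Fin n) (Fin n) ℝ).mulVec x) := by
  have hsw : ∀ a b : Fin n → ℝ, a ⬝ᵥ W.mulVec b = W.mulVec a ⬝ᵥ b := by
    intro a b
    rw [dotProduct_mulVec, ← vecMul_transpose, hsymm.eq]
  set y : Fin n → ℝ := x - W.mulVec x with hy
  have hIW : ∀ a : Fin n → ℝ, (1 - W : Matrix (Fin n) (Fin n) ℝ).mulVec a = a - W.mulVec a := by
    intro a; rw [sub_mulVec, one_mulVec]
  have hkey : x ⬝ᵥ ((1 - W : Matrix (Fin n) (Fin n) ℝ).mulVec x)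
      - (W.mulVec x) ⬝ᵥ ((1 - W : Matrix (Fin n) (Fin n) ℝ).mulVec (W.mulVec x))
      = y ⬝ᵥ y + y ⬝ᵥ W.mulVec y := by
    have hWy : W.mulVec y = W.mulVec x - W.mulVec (W.mulVec x) := by
      rw [hy, mulVec_sub]
    rw [hIW, hIW, hy, hWy]
    simp only [dotProduct_sub, sub_dotProduct]
    have e1 : W.mulVec x ⬝ᵥ x = x ⬝ᵥ W.mulVec x := dotProduct_comm _ _
    have e2 : W.mulVec x ⬝ᵥ W.mulVec x = x ⬝ᵥ W.mulVec (W.mulVec x) := by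
      rw [hsw x (W.mulVec x)]
    have e3 : W.mulVec (W.mulVec x) ⬝ᵥ W.mulVec x
        = W.mulVec x ⬝ᵥ W.mulVec (W.mulVec x) := dotProduct_comm _ _
    rw [e1]
    linarith [e2, e3]
  have hpos : 0 ≤ y ⬝ᵥ y + y ⬝ᵥ W.mulVec y := by
    have := aux_IplusW W hsymm hnonneg hrow y
    have h1 : y ⬝ᵥ y = ∑ i, y i * y i := rfl
    have h2 : y ⬝ᵥ W.mulVec y = ∑ i, ∑ j, W i j * (y i * y j) := by
      simp only [dotProduct, mulVec, Finset.mul_sum]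
      refine Finset.sum_congr rfl fun i _ => Finset.sum_congr rfl fun j _ => by ring
    rw [h1, h2]; exact this
  linarith [hkey]

end Aux

theorem aggregation_shrinks_distance
    (n d : ℕ) (hn : 0 < n) (hd : 0 < d)
    (W : Matrix (Fin n) (Fin n) ℝ) (hsymm : W.IsSymm)
    (hnonneg : ∀ i j, 0 ≤ W i j) (hrow : ∀ i, ∑ j, W i j = 1)
    (L : Matrix (Fin n) (Fin n) ℝ) (hL : L = 1 - W)
    (D : Matrix (Fin n) (Fin d) ℝ → ℝ)
    (hD : ∀ X, D X = (1 / 4) * ∑ i, ∑ j, W i j * ∑ k, (X i k - X j k) ^ 2) :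
    (∀ X : Matrix (Fin n) (Fin d) ℝ, D X = (1 / 2) * (Xᵀ * L * X).trace) ∧
    (∀ X : Matrix (Fin n) (Fin d) ℝ, D (W * X) ≤ D X) ∧
    (∀ x : Fin n → ℝ, (W.mulVec x) ⬝ᵥ (L.mulVec (W.mulVec x)) ≤ x ⬝ᵥ (L.mulVec x)) := by
  subst hL
  -- D in terms of columns
  have hDcol : ∀ X : Matrix (Fin n) (Fin d) ℝ,
      D X = (1 / 2) * ∑ k, (fun i => X i k) ⬝ᵥ
        ((1 - W : Matrix (Fin n) (Fin n) ℝ).mulVec (fun i => X i k)) := by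
    intro X
    rw [hD]
    have swap : ∑ i, ∑ j, W i j * ∑ k, (X i k - X j k) ^ 2
        = ∑ k : Fin d, ∑ i, ∑ j, W i j * (X i k - X j k) ^ 2 := by
      calc ∑ i, ∑ j, W i j * ∑ k, (X i k - X j k) ^ 2
          = ∑ i, ∑ j, ∑ k, W i j * (X i k - X j k) ^ 2 :=
            Finset.sum_congr rfl fun i _ => Finset.sum_congr rfl fun j _ => Finset.mul_sum _ _ _
        _ = ∑ i, ∑ k, ∑ j, W i j * (X i k - X j k) ^ 2 :=
            Finset.sum_congr rfl fun i _ => Finset.sum_comm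
        _ = ∑ k, ∑ i, ∑ j, W i j * (X i k - X j k) ^ 2 := Finset.sum_comm
    rw [swap]
    have : ∀ k : Fin d, ∑ i, ∑ j, W i j * (X i k - X j k) ^ 2
        = 2 * ((fun i => X i k) ⬝ᵥ ((1 - W : Matrix (Fin n) (Fin n) ℝ).mulVec (fun i => X i k))) :=
      fun k => aux_quad W hsymm hrow _
    calc (1:ℝ)/4 * ∑ k : Fin d, ∑ i, ∑ j, W i j * (X i k - X j k) ^ 2
        = (1:ℝ)/4 * ∑ k : Fin d, 2 * ((fun i => X i k) ⬝ᵥ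
            ((1 - W : Matrix (Fin n) (Fin n) ℝ).mulVec (fun i => X i k))) := by
          rw [Finset.sum_congr rfl fun k _ => this k]
      _ = _ := by rw [← Finset.mul_sum]; ring
  have htrace : ∀ X : Matrix (Fin n) (Fin d) ℝ,
      (Xᵀ * (1 - W) * X).trace
        = ∑ k, (fun i => X i k) ⬝ᵥ ((1 - W : Matrix (Fin n) (Fin n) ℝ).mulVec (fun i => X i k)) := by
    intro X
    simp only [Matrix.trace, Matrix.diag, Matrix.mul_apply, Matrix.transpose_apply,
      dotProduct, mulVec, Finset.sum_mul, Finset.mul_sum]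
    have hIs : ((1 : Matrix (Fin n) (Fin n) ℝ) - W).IsSymm := by
      rw [Matrix.IsSymm, Matrix.transpose_sub, Matrix.transpose_one, hsymm.eq]
    refine Finset.sum_congr rfl fun k _ => ?_
    refine Finset.sum_congr rfl fun i _ => Finset.sum_congr rfl fun j _ => ?_
    rw [hIs.apply i j]; ring
  refine ⟨fun X => by rw [hDcol X, htrace X], ?_, fun x => aux_shrink W hsymm hnonneg hrow x⟩
  intro X
  rw [hDcol X, hDcol (W * X)]
  have hcol : ∀ k : Fin d, (fun i => (W * X) i k) = W.mulVec (fun i => X i k) := by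
    intro k; funext i; simp [Matrix.mul_apply, mulVec, dotProduct]
  have hsum : ∑ k, (fun i => (W * X) i k) ⬝ᵥ
        ((1 - W : Matrix (Fin n) (Fin n) ℝ).mulVec (fun i => (W * X) i k))
      ≤ ∑ k, (fun i => X i k) ⬝ᵥ ((1 - W : Matrix (Fin n) (Fin n) ℝ).mulVec (fun i => X i k)) := by
    refine Finset.sum_le_sum fun k _ => ?_
    rw [hcol k]
    exact aux_shrink W hsymm hnonneg hrow _
  linarith
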